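/- Let Φ be a Gaussian mixture density with k components in ℝ^d, with weights α_i, means μ_i, and covariance matrices Σ_i. Then the critical set Crit(Φ) is contained in the set M = { (∑_{i=1}^k w_i Σ_i^{-1})^{-1} (∑_{i=1}^k w_i Σ_i^{-1} μ_i) : w ∈ Δ_k }, where Δ_k = { w ∈ [0,1]^k : ∑_{i=1}^k w_i = 1 } is the probability simplex; in particular, Crit(Φ) is compact. -/

import Mathlib

open scoped BigOperators RealInnerProductSpace
open Matrix

/-- The density of a (nondegenerate) Gaussian with mean `μ` and covariance matrix `S`
on the Euclidean space indexed by `ι`. -/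
noncomputable def gaussianPdf {ι : Type*} [Fintype ι] [DecidableEq ι]
    (μ : EuclideanSpace ℝ ι) (S : Matrix ι ι ℝ) (x : EuclideanSpace ℝ ι) : ℝ :=
  (2 * Real.pi) ^ (-(Fintype.card ι : ℝ) / 2) * S.det ^ (-(1 : ℝ) / 2) *
    Real.exp (-(1 / 2 : ℝ) * ((fun i => x i - μ i) ⬝ᵥ (S⁻¹ *ᵥ (fun i => x i - μ i))))

/-- A `k`-component Gaussian mixture density. -/
noncomputable def mixturePdf {ι : Type*} [Fintype ι] [DecidableEq ι] {k : ℕ}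
    (α : Fin k → ℝ) (μ : Fin k → EuclideanSpace ℝ ι) (S : Fin k → Matrix ι ι ℝ)
    (x : EuclideanSpace ℝ ι) : ℝ :=
  ∑ i, α i * gaussianPdf (μ i) (S i) x

/-- `Φ` is a Gaussian mixture density with weights `α`, means `μ`,
and (positive definite) covariance matrices `S`. -/
def IsGaussianMixture {ι : Type*} [Fintype ι] [DecidableEq ι] {k : ℕ}
    (Φ : EuclideanSpace ℝ ι → ℝ) (α : Fin k → ℝ) (μ : Fin k → EuclideanSpace ℝ ι)
    (S : Fin k → Matrix ι ι ℝ) : Prop :=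
  (∀ i, 0 < α i) ∧ (∑ i, α i) = 1 ∧ (∀ i, (S i).PosDef) ∧
    ∀ x, Φ x = mixturePdf α μ S x

/-- The Hessian matrix of `f : ℝ^ι → ℝ` at `x`. -/
noncomputable def hessianMatrix {ι : Type*} [Fintype ι] [DecidableEq ι]
    (f : EuclideanSpace ℝ ι → ℝ) (x : EuclideanSpace ℝ ι) : Matrix ι ι ℝ :=
  Matrix.of fun i j =>
    iteratedFDeriv ℝ 2 f x ![EuclideanSpace.single i 1, EuclideanSpace.single j 1]

section Aux

variable {d k : ℕ}

lemma quad_hasFDerivAt' (M : Matrix (Fin d) (Fin d) ℝ) (hM : ∀ a b, M a b = M b a)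
    (m x : EuclideanSpace ℝ (Fin d)) :
    HasFDerivAt (fun y : EuclideanSpace ℝ (Fin d) =>
        (fun j => y j - m j) ⬝ᵥ (M *ᵥ fun j => y j - m j))
      (∑ j, (2 * (M *ᵥ fun l => x l - m l) j) •
        (EuclideanSpace.proj j : EuclideanSpace ℝ (Fin d) →L[ℝ] ℝ)) x := by
  have base : ∀ j, HasFDerivAt (fun y : EuclideanSpace ℝ (Fin d) => y j - m j)
      (EuclideanSpace.proj j : EuclideanSpace ℝ (Fin d) →L[ℝ] ℝ) x :=
    fun j => by
      have h := (EuclideanSpace.proj j : EuclideanSpace ℝ (Fin d) →L[ℝ] ℝ).hasFDerivAt (x := x)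
      exact h.sub_const (m j)
  have hterm : ∀ j l, HasFDerivAt
      (fun y : EuclideanSpace ℝ (Fin d) => (y j - m j) * (M j l * (y l - m l)))
      (((x j - m j)) • ((M j l) • (EuclideanSpace.proj l : EuclideanSpace ℝ (Fin d) →L[ℝ] ℝ))
        + (M j l * (x l - m l)) • (EuclideanSpace.proj j : EuclideanSpace ℝ (Fin d) →L[ℝ] ℝ)) x :=
    fun j l => (base j).mul ((base l).const_mul (M j l))
  have hsum : HasFDerivAt
      (fun y : EuclideanSpace ℝ (Fin d) => ∑ j, ∑ l, (y j - m j) * (M j l * (y l - m l)))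
      (∑ j, ∑ l, (((x j - m j)) • ((M j l) • (EuclideanSpace.proj l : EuclideanSpace ℝ (Fin d) →L[ℝ] ℝ))
        + (M j l * (x l - m l)) • (EuclideanSpace.proj j : EuclideanSpace ℝ (Fin d) →L[ℝ] ℝ))) x := by
    refine HasFDerivAt.fun_sum fun j _ => HasFDerivAt.fun_sum fun l _ => hterm j l
  have hfun : (fun y : EuclideanSpace ℝ (Fin d) =>
      (fun j => y j - m j) ⬝ᵥ (M *ᵥ fun j => y j - m j)) =
      fun y => ∑ j, ∑ l, (y j - m j) * (M j l * (y l - m l)) := by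
    funext y
    simp [dotProduct, Matrix.mulVec, Finset.mul_sum]
  rw [hfun]
  convert hsum using 1
  ext y
  simp only [ContinuousLinearMap.coe_sum', Finset.sum_apply, ContinuousLinearMap.coe_smul',
    Pi.smul_apply, ContinuousLinearMap.add_apply, PiLp.proj_apply, smul_eq_mul,
    Matrix.mulVec, dotProduct]
  rw [Finset.sum_congr rfl (fun j _ => Finset.sum_add_distrib), Finset.sum_add_distrib,
    Finset.sum_comm (s := Finset.univ) (t := Finset.univ)
      (f := fun j l => (x j - m j) * (M j l * y l))]
  have h1 : ∀ j : Fin d, ∑ l, (x l - m l) * (M l j * y j) = (∑ l, M j l * (x l - m l)) * y j := by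
    intro j
    rw [Finset.sum_mul]
    exact Finset.sum_congr rfl fun l _ => by rw [hM j l]; ring
  have h2 : ∀ j : Fin d, ∑ l, M j l * (x l - m l) * y j = (∑ l, M j l * (x l - m l)) * y j :=
    fun j => by rw [Finset.sum_mul]
  calc ∑ j, 2 * (∑ l, M j l * (x l - m l)) * y j
      = ∑ j, ((∑ l, M j l * (x l - m l)) * y j + (∑ l, M j l * (x l - m l)) * y j) := by
        refine Finset.sum_congr rfl fun j _ => by ring
    _ = (∑ j, ∑ l, (x l - m l) * (M l j * y j)) + ∑ j, ∑ l, M j l * (x l - m l) * y j := by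
        rw [Finset.sum_add_distrib]
        congr 1
        · exact Finset.sum_congr rfl fun j _ => (h1 j).symm
        · exact Finset.sum_congr rfl fun j _ => (h2 j).symm

lemma inv_symm_entries {S0 : Matrix (Fin d) (Fin d) ℝ} (hS0 : S0.PosDef) :
    ∀ a b, S0⁻¹ a b = S0⁻¹ b a := by
  intro a b
  have h := hS0.inv.isHermitian.apply b a
  simpa using h

lemma gaussian_hasFDerivAt (m : EuclideanSpace ℝ (Fin d)) (S0 : Matrix (Fin d) (Fin d) ℝ)
    (hS0 : S0.PosDef) (x : EuclideanSpace ℝ (Fin d)) :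
    HasFDerivAt (gaussianPdf m S0)
      (∑ j, (-(gaussianPdf m S0 x * ((S0⁻¹ *ᵥ fun l => x l - m l) j))) •
        (EuclideanSpace.proj j : EuclideanSpace ℝ (Fin d) →L[ℝ] ℝ)) x := by
  set C : ℝ := (2 * Real.pi) ^ (-(Fintype.card (Fin d) : ℝ) / 2) * S0.det ^ (-(1 : ℝ) / 2) with hC
  have h1 := quad_hasFDerivAt' S0⁻¹ (inv_symm_entries hS0) m x
  have h2 := (h1.const_mul (-(1 / 2 : ℝ))).exp
  have h3 := h2.const_mul C
  have hfun : gaussianPdf m S0 = fun y : EuclideanSpace ℝ (Fin d) =>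
      C * Real.exp (-(1 / 2 : ℝ) * ((fun j => y j - m j) ⬝ᵥ (S0⁻¹ *ᵥ fun j => y j - m j))) := by
    funext y; rfl
  rw [hfun]
  refine h3.congr_fderiv ?_
  ext y
  simp only [ContinuousLinearMap.coe_sum', Finset.sum_apply, ContinuousLinearMap.coe_smul',
    Pi.smul_apply, PiLp.proj_apply, smul_eq_mul, Finset.mul_sum, gaussianPdf, hfun]
  refine Finset.sum_congr rfl fun j _ => ?_
  ring

/-- Negative of the gradient field of the mixture, coordinatewise. -/
noncomputable def Gfun (α : Fin k → ℝ) (μ : Fin k → EuclideanSpace ℝ (Fin d))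
    (S : Fin k → Matrix (Fin d) (Fin d) ℝ) (x : EuclideanSpace ℝ (Fin d)) : Fin d → ℝ :=
  fun j => ∑ i, α i * gaussianPdf (μ i) (S i) x * ((S i)⁻¹ *ᵥ fun l => x l - μ i l) j

lemma mixture_hasFDerivAt (α : Fin k → ℝ) (μ : Fin k → EuclideanSpace ℝ (Fin d))
    (S : Fin k → Matrix (Fin d) (Fin d) ℝ) (hS : ∀ i, (S i).PosDef)
    (x : EuclideanSpace ℝ (Fin d)) :
    HasFDerivAt (mixturePdf α μ S)
      (∑ j, (-(Gfun α μ S x j)) •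
        (EuclideanSpace.proj j : EuclideanSpace ℝ (Fin d) →L[ℝ] ℝ)) x := by
  have h : HasFDerivAt (mixturePdf α μ S)
      (∑ i, (α i) • ∑ j, (-(gaussianPdf (μ i) (S i) x * (((S i)⁻¹ *ᵥ fun l => x l - μ i l) j))) •
        (EuclideanSpace.proj j : EuclideanSpace ℝ (Fin d) →L[ℝ] ℝ)) x := by
    have : mixturePdf α μ S = fun y => ∑ i, α i * gaussianPdf (μ i) (S i) y := by
      funext y; rfl
    rw [this]
    exact HasFDerivAt.fun_sum fun i _ => (gaussian_hasFDerivAt (μ i) (S i) (hS i) x).const_mul (α i)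
  convert h using 1
  ext y
  simp only [ContinuousLinearMap.coe_sum', Finset.sum_apply, ContinuousLinearMap.coe_smul',
    Pi.smul_apply, PiLp.proj_apply, smul_eq_mul, Gfun, Finset.mul_sum, Finset.sum_mul,
    neg_mul, Finset.sum_neg_distrib, mul_neg]
  rw [Finset.sum_comm]
  congr 1
  refine Finset.sum_congr rfl fun i _ => Finset.sum_congr rfl fun j _ => by ring

lemma grad_zero_iff (α : Fin k → ℝ) (μ : Fin k → EuclideanSpace ℝ (Fin d))
    (S : Fin k → Matrix (Fin d) (Fin d) ℝ) (Φ : EuclideanSpace ℝ (Fin d) → ℝ)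
    (hΦ : IsGaussianMixture Φ α μ S) (x : EuclideanSpace ℝ (Fin d)) :
    gradient Φ x = 0 ↔ ∀ j, Gfun α μ S x j = 0 := by
  obtain ⟨hα, hsum, hS, hform⟩ := hΦ
  have hΦeq : Φ = mixturePdf α μ S := funext hform
  have hd := mixture_hasFDerivAt α μ S hS x
  rw [← hΦeq] at hd
  have hfd : fderiv ℝ Φ x = ∑ j, (-(Gfun α μ S x j)) •
      (EuclideanSpace.proj j : EuclideanSpace ℝ (Fin d) →L[ℝ] ℝ) := hd.fderiv
  have hgrad0 : gradient Φ x = 0 ↔ fderiv ℝ Φ x = 0 := by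
    unfold gradient
    constructor
    · intro h
      have := congrArg (InnerProductSpace.toDual ℝ (EuclideanSpace ℝ (Fin d))) h
      simpa using this
    · intro h; rw [h]; simp
  rw [hgrad0, hfd]
  constructor
  · intro h j
    have := congrFun (congrArg DFunLike.coe h) (EuclideanSpace.single j 1)
    simp only [ContinuousLinearMap.coe_sum', Finset.sum_apply, ContinuousLinearMap.coe_smul',
      Pi.smul_apply, PiLp.proj_apply, smul_eq_mul, ContinuousLinearMap.zero_apply,
      EuclideanSpace.single_apply, Pi.zero_apply, mul_ite, mul_one, mul_zero] at this
    rw [Finset.sum_ite_eq' Finset.univ j (fun j' => -(Gfun α μ S x j'))] at this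
    simp at this
    linarith [this]
  · intro h
    ext y
    simp [h]

lemma gaussianPdf_pos (m : EuclideanSpace ℝ (Fin d)) {S0 : Matrix (Fin d) (Fin d) ℝ}
    (hS0 : S0.PosDef) (x : EuclideanSpace ℝ (Fin d)) : 0 < gaussianPdf m S0 x := by
  have hdet := hS0.det_pos
  have hπ := Real.pi_pos
  unfold gaussianPdf
  positivity

lemma sum_smulMulVec (A : Fin k → Matrix (Fin d) (Fin d) ℝ) (w : Fin k → ℝ) (v : Fin d → ℝ) :
    (∑ i, w i • A i) *ᵥ v = ∑ i, w i • (A i *ᵥ v) := by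
  funext j
  simp only [Matrix.mulVec, dotProduct, Finset.sum_apply, Matrix.sum_apply,
    Pi.smul_apply, Matrix.smul_apply, smul_eq_mul, Finset.sum_mul, Finset.mul_sum]
  rw [Finset.sum_comm]
  exact Finset.sum_congr rfl fun i _ => Finset.sum_congr rfl fun l _ => by ring

lemma sum_posDef (S : Fin k → Matrix (Fin d) (Fin d) ℝ) (hS : ∀ i, (S i).PosDef)
    (w : Fin k → ℝ) (hw0 : ∀ i, 0 ≤ w i) (hex : ∃ i, 0 < w i) :
    (∑ i, w i • (S i)⁻¹).PosDef := by
  rw [posDef_iff_dotProduct_mulVec]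
  constructor
  · show _ = _
    rw [Matrix.conjTranspose_sum]
    refine Finset.sum_congr rfl fun i _ => ?_
    rw [Matrix.conjTranspose_smul, star_trivial, (hS i).inv.isHermitian.eq]
  · intro v hv
    have hstar : star v = v := by funext j; exact star_trivial _
    rw [hstar, sum_smulMulVec]
    have hdot : v ⬝ᵥ ∑ i, w i • ((S i)⁻¹ *ᵥ v) = ∑ i, w i * (v ⬝ᵥ ((S i)⁻¹ *ᵥ v)) := by
      simp [dotProduct, Finset.sum_apply, Finset.mul_sum]
      rw [Finset.sum_comm]
      exact Finset.sum_congr rfl fun i _ => Finset.sum_congr rfl fun j _ => by ring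
    rw [hdot]
    obtain ⟨i0, hi0⟩ := hex
    refine Finset.sum_pos' (fun i _ => ?_) ⟨i0, Finset.mem_univ i0, ?_⟩
    · have h := (hS i).inv.posSemidef.dotProduct_mulVec_nonneg v
      rw [hstar] at h
      exact mul_nonneg (hw0 i) (by exact_mod_cast h)
    · have h := (hS i0).inv.dotProduct_mulVec_pos hv
      rw [hstar] at h
      exact mul_pos hi0 (by exact_mod_cast h)

end Aux

/-- Lemma: compact containment of the critical set.
For a Gaussian mixture density $Φ$, the critical set $\mathrm{Crit}(Φ)$ is contained in
$\{ (\sum_i w_i Σ_i^{-1})^{-1}(\sum_i w_i Σ_i^{-1} μ_i) : w ∈ Δ_k \}$, and is compact. -/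
theorem crit_subset_simplex_image_and_compact
    {d k : ℕ} (α : Fin k → ℝ) (μ : Fin k → EuclideanSpace ℝ (Fin d))
    (S : Fin k → Matrix (Fin d) (Fin d) ℝ)
    (Φ : EuclideanSpace ℝ (Fin d) → ℝ)
    (hΦ : IsGaussianMixture Φ α μ S) :
    {x : EuclideanSpace ℝ (Fin d) | gradient Φ x = 0} ⊆
      {x : EuclideanSpace ℝ (Fin d) | ∃ w : Fin k → ℝ,
        (∀ i, 0 ≤ w i ∧ w i ≤ 1) ∧ (∑ i, w i) = 1 ∧
        ∀ j, x j = ((∑ i, w i • (S i)⁻¹)⁻¹ *ᵥ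
          (∑ i, w i • ((S i)⁻¹ *ᵥ (fun l => μ i l)))) j} ∧
    IsCompact {x : EuclideanSpace ℝ (Fin d) | gradient Φ x = 0} := by
  obtain ⟨hα, hsum, hS, hform⟩ := hΦ
  have hΦ' : IsGaussianMixture Φ α μ S := ⟨hα, hsum, hS, hform⟩
  have hk : 0 < k := by
    rcases Nat.eq_zero_or_pos k with h | h
    · subst h; simp at hsum
    · exact h
  haveI : Nonempty (Fin k) := ⟨⟨0, hk⟩⟩
  -- Part 1: containment
  have hpart1 : {x : EuclideanSpace ℝ (Fin d) | gradient Φ x = 0} ⊆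
      {x : EuclideanSpace ℝ (Fin d) | ∃ w : Fin k → ℝ,
        (∀ i, 0 ≤ w i ∧ w i ≤ 1) ∧ (∑ i, w i) = 1 ∧
        ∀ j, x j = ((∑ i, w i • (S i)⁻¹)⁻¹ *ᵥ
          (∑ i, w i • ((S i)⁻¹ *ᵥ (fun l => μ i l)))) j} := by
    intro x hx
    have hG : ∀ j, Gfun α μ S x j = 0 := (grad_zero_iff α μ S Φ hΦ' x).mp hx
    set β : Fin k → ℝ := fun i => α i * gaussianPdf (μ i) (S i) x with hβdef
    have hβ : ∀ i, 0 < β i := fun i => mul_pos (hα i) (gaussianPdf_pos (μ i) (hS i) x)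
    set T : ℝ := ∑ i, β i with hTdef
    have hT : 0 < T := Finset.sum_pos (fun i _ => hβ i) Finset.univ_nonempty
    set w : Fin k → ℝ := fun i => β i / T with hwdef
    have hw0 : ∀ i, 0 ≤ w i := fun i => div_nonneg (hβ i).le hT.le
    have hw1 : ∀ i, w i ≤ 1 := fun i => by
      rw [hwdef]
      exact (div_le_one hT).2 (Finset.single_le_sum (fun i _ => (hβ i).le) (Finset.mem_univ i))
    have hws : ∑ i, w i = 1 := by
      rw [hwdef, ← Finset.sum_div]
      exact div_self hT.ne'
    have hA : (∑ i, w i • (S i)⁻¹).PosDef :=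
      sum_posDef S hS w hw0 ⟨⟨0, hk⟩, div_pos (hβ _) hT⟩
    have hAx : (∑ i, w i • (S i)⁻¹) *ᵥ (fun l => x l) =
        ∑ i, w i • ((S i)⁻¹ *ᵥ (fun l => μ i l)) := by
      rw [sum_smulMulVec]
      funext j
      have hGj := hG j
      have hsplit : ∀ i : Fin k, ((S i)⁻¹ *ᵥ fun l => x l - μ i l) j =
          ((S i)⁻¹ *ᵥ fun l => x l) j - ((S i)⁻¹ *ᵥ fun l => μ i l) j := by
        intro i
        have : (fun l => x l - μ i l) = (fun l => x l) - (fun l => μ i l) := rfl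
        rw [this, Matrix.mulVec_sub]
        rfl
      have hGj' : ∑ i, β i * (((S i)⁻¹ *ᵥ fun l => x l) j) =
          ∑ i, β i * (((S i)⁻¹ *ᵥ fun l => μ i l) j) := by
        have : ∑ i, (β i * (((S i)⁻¹ *ᵥ fun l => x l) j)
            - β i * (((S i)⁻¹ *ᵥ fun l => μ i l) j)) = 0 := by
          rw [← hGj]
          unfold Gfun
          refine Finset.sum_congr rfl fun i _ => ?_
          rw [hsplit i]; ring
        rw [Finset.sum_sub_distrib] at this
        linarith [this]
      simp only [Finset.sum_apply, Pi.smul_apply, smul_eq_mul, hwdef]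
      calc ∑ i, β i / T * (((S i)⁻¹ *ᵥ fun l => x l) j)
          = (∑ i, β i * (((S i)⁻¹ *ᵥ fun l => x l) j)) / T := by
            rw [Finset.sum_div]
            exact Finset.sum_congr rfl fun i _ => by ring
        _ = (∑ i, β i * (((S i)⁻¹ *ᵥ fun l => μ i l) j)) / T := by rw [hGj']
        _ = ∑ i, β i / T * (((S i)⁻¹ *ᵥ fun l => μ i l) j) := by
            rw [Finset.sum_div]
            exact Finset.sum_congr rfl fun i _ => by ring
    refine ⟨w, fun i => ⟨hw0 i, hw1 i⟩, hws, fun j => ?_⟩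
    rw [← hAx, Matrix.mulVec_mulVec,
      Matrix.nonsing_inv_mul _ hA.det_pos.ne'.isUnit, Matrix.one_mulVec]
  refine ⟨hpart1, ?_⟩
  -- Part 2: compactness
  -- the critical set is closed
  have hcrit_eq : {x : EuclideanSpace ℝ (Fin d) | gradient Φ x = 0} =
      ⋂ j, {x : EuclideanSpace ℝ (Fin d) | Gfun α μ S x j = 0} := by
    ext x
    simp only [Set.mem_setOf_eq, Set.mem_iInter]
    exact grad_zero_iff α μ S Φ hΦ' x
  have hGcont : ∀ j, Continuous fun x : EuclideanSpace ℝ (Fin d) => Gfun α μ S x j := by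
    intro j
    refine continuous_finset_sum _ fun i _ => ?_
    have h1 : Continuous (gaussianPdf (μ i) (S i)) :=
      continuous_iff_continuousAt.2 fun x =>
        (gaussian_hasFDerivAt (μ i) (S i) (hS i) x).differentiableAt.continuousAt
    have h2 : Continuous fun x : EuclideanSpace ℝ (Fin d) =>
        ((S i)⁻¹ *ᵥ fun l => x l - μ i l) j := by
      have heq : (fun x : EuclideanSpace ℝ (Fin d) => ((S i)⁻¹ *ᵥ fun l => x l - μ i l) j) =
          fun x => ∑ l, (S i)⁻¹ j l * (x l - μ i l) := rfl
      rw [heq]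
      refine continuous_finset_sum _ fun l _ => continuous_const.mul ?_
      exact ((EuclideanSpace.proj l :
        EuclideanSpace ℝ (Fin d) →L[ℝ] ℝ).continuous).sub continuous_const
    exact (continuous_const.mul h1).mul h2
  have hclosed : IsClosed {x : EuclideanSpace ℝ (Fin d) | gradient Φ x = 0} := by
    rw [hcrit_eq]
    exact isClosed_iInter fun j => isClosed_eq (hGcont j) continuous_const
  -- a compact superset
  set Δ : Set (Fin k → ℝ) := {w | (∀ i, 0 ≤ w i ∧ w i ≤ 1) ∧ ∑ i, w i = 1} with hΔdef
  have hΔc : IsCompact Δ := by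
    have hpi : IsCompact (Set.pi Set.univ fun _ : Fin k => Set.Icc (0 : ℝ) 1) :=
      isCompact_univ_pi fun _ => isCompact_Icc
    refine hpi.of_isClosed_subset ?_ ?_
    · have h1 : IsClosed {w : Fin k → ℝ | ∀ i, 0 ≤ w i ∧ w i ≤ 1} := by
        rw [Set.setOf_forall]
        refine isClosed_iInter fun i => ?_
        have : {w : Fin k → ℝ | 0 ≤ w i ∧ w i ≤ 1} =
            {w : Fin k → ℝ | 0 ≤ w i} ∩ {w | w i ≤ 1} := rfl
        rw [this]
        exact (isClosed_le continuous_const (continuous_apply i)).inter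
          (isClosed_le (continuous_apply i) continuous_const)
      have h2 : IsClosed {w : Fin k → ℝ | ∑ i, w i = 1} :=
        isClosed_eq (continuous_finset_sum _ fun i _ => continuous_apply i) continuous_const
      exact h1.inter h2
    · intro w hw i _
      exact ⟨(hw.1 i).1, (hw.1 i).2⟩
  set g₀ : (Fin k → ℝ) → (Fin d → ℝ) := fun w =>
    (∑ i, w i • (S i)⁻¹)⁻¹ *ᵥ (∑ i, w i • ((S i)⁻¹ *ᵥ (fun l => μ i l))) with hg₀def
  have hg₀ : ContinuousOn g₀ Δ := by
    intro w hw
    refine ContinuousAt.continuousWithinAt ?_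
    have hex : ∃ i, 0 < w i := by
      by_contra hc
      push_neg at hc
      have : ∑ i, w i = 0 := Finset.sum_eq_zero fun i _ =>
        le_antisymm (hc i) (hw.1 i).1
      rw [hw.2] at this
      norm_num at this
    have hA : (∑ i, w i • (S i)⁻¹).PosDef :=
      sum_posDef S hS w (fun i => (hw.1 i).1) hex
    have hAc : Continuous fun w : Fin k → ℝ => ∑ i, w i • (S i)⁻¹ :=
      continuous_finset_sum _ fun i _ => (continuous_apply i).smul continuous_const
    have hinv : ContinuousAt Inv.inv (∑ i, w i • (S i)⁻¹) := by
      refine continuousAt_matrix_inv _ ?_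
      rw [Ring.inverse_eq_inv']
      exact continuousAt_inv₀ hA.det_pos.ne'
    have h1 : ContinuousAt (fun w : Fin k → ℝ => (∑ i, w i • (S i)⁻¹)⁻¹) w :=
      ContinuousAt.comp (f := fun w : Fin k → ℝ => ∑ i, w i • (S i)⁻¹) hinv
        (hAc.continuousAt (x := w))
    have h2 : Continuous fun w : Fin k → ℝ => ∑ i, w i • ((S i)⁻¹ *ᵥ (fun l => μ i l)) :=
      continuous_finset_sum _ fun i _ => (continuous_apply i).smul continuous_const
    have hmv : Continuous fun p : Matrix (Fin d) (Fin d) ℝ × (Fin d → ℝ) => p.1 *ᵥ p.2 :=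
      continuous_fst.matrix_mulVec continuous_snd
    exact hmv.continuousAt.comp (h1.prodMk h2.continuousAt)
  set K : Set (EuclideanSpace ℝ (Fin d)) :=
    (fun w => (EuclideanSpace.equiv (Fin d) ℝ).symm (g₀ w)) '' Δ with hKdef
  have hKc : IsCompact K := by
    refine hΔc.image_of_continuousOn ?_
    exact ((EuclideanSpace.equiv (Fin d) ℝ).symm : (Fin d → ℝ) →L[ℝ]
      EuclideanSpace ℝ (Fin d)).continuous.comp_continuousOn hg₀
  have hsubK : {x : EuclideanSpace ℝ (Fin d) | gradient Φ x = 0} ⊆ K := by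
    intro x hx
    obtain ⟨w, hwb, hwsum, hxj⟩ := hpart1 hx
    refine ⟨w, ⟨hwb, hwsum⟩, ?_⟩
    ext j
    exact (hxj j).symm
  exact hKc.of_isClosed_subset hclosed hsubK
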